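/- The blow-up graph Γ_3(t) (each vertex of Γ_3 replaced by t vertices and each edge by a complete bipartite graph K_{t,t}) admits a perfect triangle tiling (3t vertex-disjoint triangles covering all 9t vertices) if and only if t is even. -/

import Mathlib

/-- The graph `Γ_k` (0-indexed). -/
def gammaGraph (k : ℕ) : SimpleGraph (Fin k × Fin k) where
  Adj p q := p.1 ≠ q.1 ∧
    ((p.2 ≠ q.2 ∧ (p.2.val < k - 2 ∨ q.2.val < k - 2)) ∨ (p.2 = q.2 ∧ k - 2 ≤ p.2.val))
  symm := by
    constructor
    rintro p q ⟨h1, h2⟩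
    refine ⟨h1.symm, ?_⟩
    rcases h2 with ⟨hne, hor⟩ | ⟨heq, hge⟩
    · exact Or.inl ⟨hne.symm, hor.symm⟩
    · exact Or.inr ⟨heq.symm, heq ▸ hge⟩
  loopless := ⟨fun _ h => h.1 rfl⟩

/-- The blow-up `G(t)`: each vertex replaced by `t` vertices, each edge by `K_{t,t}`. -/
def blowup {V : Type*} (G : SimpleGraph V) (t : ℕ) : SimpleGraph (V × Fin t) :=
  SimpleGraph.comap Prod.fst G

instance gammaDec : DecidableRel (gammaGraph 3).Adj := fun p q =>
  decidable_of_iff (p.1 ≠ q.1 ∧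
    ((p.2 ≠ q.2 ∧ (p.2.val < 1 ∨ q.2.val < 1)) ∨ (p.2 = q.2 ∧ 1 ≤ p.2.val))) Iff.rfl

lemma gamma_key : ∀ p q r : Fin 3 × Fin 3,
    (gammaGraph 3).Adj p q → (gammaGraph 3).Adj p r → (gammaGraph 3).Adj q r →
    ((if p.2 = 0 then 1 else 0) + (if q.2 = 0 then 1 else 0) + (if r.2 = 0 then 1 else 0) ≤ 1 ∧
     ((if p.2 = 0 then 1 else 0) + (if q.2 = 0 then 1 else 0) + (if r.2 = 0 then 1 else 0) = 1 →
      2 ∣ ((if p.2 = 1 then 1 else 0) + (if q.2 = 1 then 1 else 0) + (if r.2 = 1 then 1 else 0) : ℕ))) := by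
  decide

/-- One triangle of the tiling. -/

def tri (m : ℕ) (i : Fin 3) (c : Fin 2) (s : Fin m) :
    Finset ((Fin 3 × Fin 3) × Fin (m + m)) :=
  { ((i, 0), ⟨c.val * m + s.val, by
      have h1 : c.val * m ≤ 1 * m := Nat.mul_le_mul_right m (by have := c.isLt; omega)
      have := s.isLt; omega⟩),
    ((⟨(i.val + 1) % 3, Nat.mod_lt _ (by norm_num)⟩, ⟨c.val + 1, by have := c.isLt; omega⟩),
      ⟨s.val, by have := s.isLt; omega⟩),
    ((⟨(i.val + 2) % 3, Nat.mod_lt _ (by norm_num)⟩, ⟨c.val + 1, by have := c.isLt; omega⟩),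
      ⟨m + s.val, by have := s.isLt; omega⟩) }

lemma tri_clique (m : ℕ) (i : Fin 3) (c : Fin 2) (s : Fin m) :
    (blowup (gammaGraph 3) (m + m)).IsNClique 3 (tri m i c s) := by
  rw [tri, SimpleGraph.is3Clique_triple_iff]
  have hi := i.isLt
  have hc := c.isLt
  refine ⟨⟨?_, Or.inl ⟨?_, Or.inl ?_⟩⟩, ⟨?_, Or.inl ⟨?_, Or.inl ?_⟩⟩, ⟨?_, Or.inr ⟨?_, ?_⟩⟩⟩ <;>
    simp [Fin.ext_iff, -Fin.val_eq_zero_iff] <;> omega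

lemma tri_param_eq {m : ℕ} {i i' : Fin 3} {c c' : Fin 2} {s s' : Fin m}
    {v : (Fin 3 × Fin 3) × Fin (m + m)}
    (h1 : v ∈ tri m i c s) (h2 : v ∈ tri m i' c' s') : i = i' ∧ c = c' ∧ s = s' := by
  have hi := i.isLt; have hi' := i'.isLt
  have hc := c.isLt; have hc' := c'.isLt
  have hs := s.isLt; have hs' := s'.isLt
  have e1 : (c.val = 0 ∧ c.val * m = 0) ∨ (c.val = 1 ∧ c.val * m = m) := by
    rcases (by omega : c.val = 0 ∨ c.val = 1) with h | h <;> simp [h]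
  have e2 : (c'.val = 0 ∧ c'.val * m = 0) ∨ (c'.val = 1 ∧ c'.val * m = m) := by
    rcases (by omega : c'.val = 0 ∨ c'.val = 1) with h | h <;> simp [h]
  simp only [tri, Finset.mem_insert, Finset.mem_singleton] at h1 h2
  rcases h1 with rfl | rfl | rfl <;> rcases h2 with h2 | h2 | h2 <;>
    simp only [Prod.ext_iff, Fin.ext_iff, Fin.val_zero] at h2 <;>
    refine ⟨Fin.ext ?_, Fin.ext ?_, Fin.ext ?_⟩ <;> omega

lemma tri_cover (m : ℕ) (v : (Fin 3 × Fin 3) × Fin (m + m)) :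
    ∃ i c s, v ∈ tri m i c s := by
  obtain ⟨⟨i, j⟩, k⟩ := v
  have hi := i.isLt; have hj := j.isLt; have hk := k.isLt
  by_cases hj0 : j.val = 0
  · by_cases hkm : k.val < m
    · exact ⟨i, ⟨0, by norm_num⟩, ⟨k.val, hkm⟩, by
        simp [tri, Prod.ext_iff, Fin.ext_iff, -Fin.val_eq_zero_iff]; omega⟩
    · exact ⟨i, ⟨1, by norm_num⟩, ⟨k.val - m, by omega⟩, by
        simp [tri, Prod.ext_iff, Fin.ext_iff, -Fin.val_eq_zero_iff]; omega⟩
  · by_cases hkm : k.val < m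
    · refine ⟨⟨(i.val + 2) % 3, Nat.mod_lt _ (by norm_num)⟩, ⟨j.val - 1, by omega⟩,
        ⟨k.val, hkm⟩, ?_⟩
      simp [tri, Prod.ext_iff, Fin.ext_iff, -Fin.val_eq_zero_iff]
      omega
    · refine ⟨⟨(i.val + 1) % 3, Nat.mod_lt _ (by norm_num)⟩, ⟨j.val - 1, by omega⟩,
        ⟨k.val - m, by omega⟩, ?_⟩
      simp [tri, Prod.ext_iff, Fin.ext_iff, -Fin.val_eq_zero_iff]
      omega

/-- `Γ₃(t)` has a perfect triangle tiling if and only if `t` is even. -/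
theorem stmt_8 (t : ℕ) :
    (∃ T : Finset (Finset ((Fin 3 × Fin 3) × Fin t)),
      (∀ s ∈ T, (blowup (gammaGraph 3) t).IsNClique 3 s) ∧
      (T : Set (Finset ((Fin 3 × Fin 3) × Fin t))).PairwiseDisjoint id ∧
      ∀ v : (Fin 3 × Fin 3) × Fin t, ∃ s ∈ T, v ∈ s) ↔ Even t := by
  constructor
  · rintro ⟨T, hcl, hdisj, hcov⟩
    classical
    have huniv : (Finset.univ : Finset ((Fin 3 × Fin 3) × Fin t)) = T.biUnion id := by
      apply Finset.ext
      intro v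
      simp only [Finset.mem_univ, Finset.mem_biUnion, id, true_iff]
      exact hcov v
    have hsum : ∀ f : ((Fin 3 × Fin 3) × Fin t) → ℕ, ∑ v : (Fin 3 × Fin 3) × Fin t, f v = ∑ s ∈ T, ∑ v ∈ s, f v := by
      intro f
      rw [huniv, Finset.sum_biUnion hdisj]
      rfl
    -- the two weight functions
    set f0 : ((Fin 3 × Fin 3) × Fin t) → ℕ := fun v => if v.1.2 = 0 then 1 else 0 with hf0
    set f1 : ((Fin 3 × Fin 3) × Fin t) → ℕ := fun v => if v.1.2 = 1 then 1 else 0 with hf1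
    have htot0 : ∑ v : (Fin 3 × Fin 3) × Fin t, f0 v = 3 * t := by
      rw [hf0, Fintype.sum_prod_type]
      simp [Finset.sum_const, Fintype.sum_prod_type, Fin.sum_univ_three]
    have htot1 : ∑ v : (Fin 3 × Fin 3) × Fin t, f1 v = 3 * t := by
      rw [hf1, Fintype.sum_prod_type]
      simp [Finset.sum_const, Fintype.sum_prod_type, Fin.sum_univ_three]
    -- per-triangle facts
    have hkey : ∀ s ∈ T, (∑ v ∈ s, f0 v ≤ 1) ∧
        ((∑ v ∈ s, f0 v = 1) → 2 ∣ ∑ v ∈ s, f1 v) := by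
      intro s hs
      obtain ⟨a, b, c, hab, hac, hbc, rfl⟩ := Finset.card_eq_three.mp (hcl s hs).card_eq
      have hA : ∀ x y, x ∈ ({a,b,c} : Finset ((Fin 3 × Fin 3) × Fin t)) → y ∈ ({a,b,c} : Finset ((Fin 3 × Fin 3) × Fin t)) → x ≠ y →
          (gammaGraph 3).Adj x.1 y.1 := by
        intro x y hx hy hxy
        exact (hcl _ hs).isClique (by exact_mod_cast hx) (by exact_mod_cast hy) hxy
      have h1 := hA a b (by simp) (by simp) hab
      have h2 := hA a c (by simp) (by simp) hac
      have h3 := hA b c (by simp) (by simp) hbc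
      have key := gamma_key a.1 b.1 c.1 h1 h2 h3
      have e0 : ∑ v ∈ ({a,b,c} : Finset ((Fin 3 × Fin 3) × Fin t)), f0 v = f0 a + f0 b + f0 c := by
        rw [Finset.sum_insert (by simp [hab, hac]), Finset.sum_pair hbc, add_assoc]
      have e1 : ∑ v ∈ ({a,b,c} : Finset ((Fin 3 × Fin 3) × Fin t)), f1 v = f1 a + f1 b + f1 c := by
        rw [Finset.sum_insert (by simp [hab, hac]), Finset.sum_pair hbc, add_assoc]
      rw [e0, e1]
      exact key
    -- card of T
    have hTcard : T.card = 3 * t := by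
      have := hsum (fun _ => 1)
      simp only [Finset.sum_const, smul_eq_mul, mul_one, Finset.card_univ] at this
      have h3 : ∀ s ∈ T, s.card = 3 := fun s hs => (hcl s hs).card_eq
      rw [Finset.sum_congr rfl h3] at this
      simp only [Finset.sum_const, smul_eq_mul] at this
      have h9 : Fintype.card ((Fin 3 × Fin 3) × Fin t) = 9 * t := by
        rw [Fintype.card_prod, Fintype.card_prod, Fintype.card_fin, Fintype.card_fin]
      omega
    have hs0 : ∑ s ∈ T, ∑ v ∈ s, f0 v = 3 * t := by rw [← hsum, htot0]
    -- every triangle has exactly one column-0 vertex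
    have hone : ∀ s ∈ T, ∑ v ∈ s, f0 v = 1 := by
      by_contra hcon
      push_neg at hcon
      obtain ⟨s0, hs0T, hne⟩ := hcon
      have hlt : ∑ s ∈ T, ∑ v ∈ s, f0 v < ∑ s ∈ T, 1 := by
        apply Finset.sum_lt_sum
        · intro i hi; exact (hkey i hi).1
        · exact ⟨s0, hs0T, lt_of_le_of_ne (hkey s0 hs0T).1 hne⟩
      simp only [Finset.sum_const, smul_eq_mul, mul_one] at hlt
      omega
    have heven : 2 ∣ ∑ s ∈ T, ∑ v ∈ s, f1 v :=
      Finset.dvd_sum (fun s hs => (hkey s hs).2 (hone s hs))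
    rw [← hsum, htot1] at heven
    rw [Nat.even_iff]
    omega
  · rintro ⟨m, rfl⟩
    classical
    refine ⟨Finset.image (fun x : Fin 3 × Fin 2 × Fin m => tri m x.1 x.2.1 x.2.2) Finset.univ,
      ?_, ?_, ?_⟩
    · intro s hs
      simp only [Finset.mem_image, Finset.mem_univ, true_and] at hs
      obtain ⟨⟨i, c, s'⟩, rfl⟩ := hs
      exact tri_clique m i c s'
    · intro s1 h1 s2 h2 hne
      simp only [Finset.coe_image, Set.mem_image, Finset.mem_coe, Finset.mem_univ,
        Finset.coe_univ, Set.image_univ, Set.mem_range] at h1 h2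
      obtain ⟨⟨i, c, s⟩, rfl⟩ := h1
      obtain ⟨⟨i', c', s'⟩, rfl⟩ := h2
      simp only [Function.onFun, id]
      rw [Finset.disjoint_left]
      intro v hv1 hv2
      obtain ⟨rfl, rfl, rfl⟩ := tri_param_eq hv1 hv2
      exact hne rfl
    · intro v
      obtain ⟨i, c, s, hv⟩ := tri_cover m v
      exact ⟨tri m i c s, Finset.mem_image.mpr ⟨(i, c, s), Finset.mem_univ _, rfl⟩, hv⟩
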